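/- arXiv:2201.12874 — 2 statements merged into one kernel-verified Lean document; each statement's English description precedes it below -/
import Mathlib

section
/- Let 1 ≤ q < p < ∞ and n ≥ 20, and set ε = n^{−(1/q − 1/p)}. Define x ∈ ℝⁿ by x₁ = 1 and xᵢ = n^{−1/q} for 2 ≤ i ≤ n, and let e₁ be the first standard basis vector. Then ‖x − e₁‖_p ≤ ε‖x‖_p (so e₁ is an (ε, ℓ_p, 1)-norm sparsifier of x), yet every x' ∈ ℝⁿ with at most ⌊n/2⌋ nonzero entries satisfies ‖x − x'‖_q > 0.1‖x‖_q. -/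
open scoped BigOperators ENNReal
open Matrix

/-- Number of nonzero entries of a vector. -/
noncomputable def nnzv {n : ℕ} (x : Fin n → ℝ) : ℕ :=
  (Finset.univ.filter fun i => x i ≠ 0).card

/-- The ℓ_p norm of a vector, for a real exponent `p`. -/
noncomputable def lpNorm {n : ℕ} (p : ℝ) (x : Fin n → ℝ) : ℝ :=
  (∑ i, |x i| ^ p) ^ (1 / p)

/-- `IsHead x c y` : `y` is obtained from `x` by keeping (at most) `c` entries that are
largest in absolute value (exactly `min c n` of them, ties broken arbitrarily) and zeroing out the rest. -/
def IsHead {n : ℕ} (x : Fin n → ℝ) (c : ℕ) (y : Fin n → ℝ) : Prop :=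
  ∃ T : Finset (Fin n), T.card = min c n ∧ (∀ i ∈ T, y i = x i) ∧ (∀ i ∉ T, y i = 0) ∧
    ∀ i ∈ T, ∀ j ∉ T, |x j| ≤ |x i|

/-- The singular values of a real matrix: square roots of the eigenvalues of `Aᵀ * A`. -/
noncomputable def singVals {m n : Type*} [Fintype m] [Fintype n] [DecidableEq n]
    (A : Matrix m n ℝ) : n → ℝ :=
  fun j => Real.sqrt ((show (Aᵀ * A).IsHermitian by
    simpa [Matrix.conjTranspose_eq_transpose_of_trivial] using
      Matrix.isHermitian_conjTranspose_mul_self A).eigenvalues j)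

/-- The Schatten p-(quasi)norm of a real matrix, for a real exponent `p > 0`. -/
noncomputable def schattenF {m n : Type*} [Fintype m] [Fintype n] [DecidableEq n]
    (p : ℝ) (A : Matrix m n ℝ) : ℝ :=
  (∑ j, singVals A j ^ p) ^ (1 / p)

/-- The spectral norm (Schatten ∞-norm): the largest singular value. -/
noncomputable def specNorm {m n : Type*} [Fintype m] [Fintype n] [DecidableEq n]
    (A : Matrix m n ℝ) : ℝ :=
  ⨆ j, singVals A j

open Classical in
/-- The Schatten p-norm with exponent `p ∈ (0,∞]`. -/
noncomputable def schattenE {m n : Type*} [Fintype m] [Fintype n] [DecidableEq n]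
    (p : ℝ≥0∞) (A : Matrix m n ℝ) : ℝ :=
  if p = ⊤ then specNorm A else schattenF p.toReal A

/-- Number of nonzero entries of a matrix. -/
noncomputable def nnz {m n : Type*} [Fintype m] [Fintype n] (A : Matrix m n ℝ) : ℕ :=
  (Finset.univ.filter fun ij : m × n => A ij.1 ij.2 ≠ 0).card

/-- for `q < p`, a good `ℓ_p`-sparsifier need not be a good `ℓ_q`-sparsifier. -/
theorem stmt1 (n : ℕ) (hn : 20 ≤ n) (p q : ℝ) (hq : 1 ≤ q) (hqp : q < p)
    (ε : ℝ) (hε : ε = (n : ℝ) ^ (-(1 / q - 1 / p)))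
    (x e₁ : Fin n → ℝ)
    (hx : ∀ i : Fin n, x i = if (i : ℕ) = 0 then 1 else (n : ℝ) ^ (-(1 / q)))
    (he : ∀ i : Fin n, e₁ i = if (i : ℕ) = 0 then 1 else 0) :
    lpNorm p (x - e₁) ≤ ε * lpNorm p x ∧
    ∀ x' : Fin n → ℝ, nnzv x' ≤ n / 2 → 0.1 * lpNorm q x < lpNorm q (x - x') := by
  have hq0 : 0 < q := by linarith
  have hp0 : 0 < p := by linarith
  have hn0 : 0 < n := by omega
  have hnR : (0:ℝ) < n := by exact_mod_cast hn0
  haveI : NeZero n := ⟨by omega⟩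
  set a : ℝ := (n:ℝ) ^ (-(1/q)) with ha_def
  have ha : 0 < a := Real.rpow_pos_of_pos hnR _
  have haq : a ^ q = (n:ℝ)⁻¹ := by
    rw [ha_def, ← Real.rpow_mul hnR.le,
      (by field_simp : -(1/q) * q = (-1:ℝ)), Real.rpow_neg_one]
  have hx0 : x ⟨0, hn0⟩ = 1 := by rw [hx]; simp
  constructor
  · -- part 1
    have hsum : ∑ i, |(x - e₁) i| ^ p ≤ (n:ℝ) * a ^ p := by
      calc ∑ i, |(x - e₁) i| ^ p ≤ ∑ _i : Fin n, a ^ p := by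
            apply Finset.sum_le_sum
            intro i _
            rcases eq_or_ne (i:ℕ) 0 with h | h
            · simp only [Pi.sub_apply, hx i, he i, h, if_true, sub_self, abs_zero]
              rw [Real.zero_rpow hp0.ne']
              positivity
            · simp only [Pi.sub_apply, hx i, he i, h, if_false, sub_zero,
                abs_of_pos ha, le_refl]
        _ = (n:ℝ) * a ^ p := by
            rw [Finset.sum_const, Finset.card_univ, Fintype.card_fin, nsmul_eq_mul]
    have hlp : lpNorm p (x - e₁) ≤ ε := by
      have h1 : lpNorm p (x - e₁) ≤ ((n:ℝ) * a ^ p) ^ (1/p) := by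
        apply Real.rpow_le_rpow _ hsum (by positivity)
        apply Finset.sum_nonneg
        intro i _
        positivity
      have h2 : ((n:ℝ) * a ^ p) ^ (1/p) = ε := by
        rw [Real.mul_rpow hnR.le (by positivity),
          ← Real.rpow_mul ha.le, mul_one_div_cancel hp0.ne', Real.rpow_one,
          ha_def, ← Real.rpow_add hnR, hε]
        ring_nf
      linarith
    have hε0 : 0 ≤ ε := by rw [hε]; positivity
    have hxn : 1 ≤ lpNorm p x := by
      have h1 : (1:ℝ) ≤ ∑ i, |x i| ^ p := by
        have hterm : |x ⟨0, hn0⟩| ^ p = 1 := by rw [hx0]; simp [Real.one_rpow]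
        calc (1:ℝ) = |x ⟨0, hn0⟩| ^ p := hterm.symm
          _ ≤ ∑ i, |x i| ^ p :=
            Finset.single_le_sum (f := fun i => |x i| ^ p)
              (fun i _ => by positivity) (Finset.mem_univ (⟨0, hn0⟩ : Fin n))
      calc (1:ℝ) = 1 ^ (1/p) := (Real.one_rpow _).symm
        _ ≤ (∑ i, |x i| ^ p) ^ (1/p) := Real.rpow_le_rpow (by norm_num) h1 (by positivity)
    calc lpNorm p (x - e₁) ≤ ε := hlp
      _ = ε * 1 := (mul_one ε).symm
      _ ≤ ε * lpNorm p x := by nlinarith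
  · -- part 2
    intro x' hx'
    -- upper bound on lpNorm q x
    have hxq : lpNorm q x ≤ 2 := by
      have hsum : ∑ i, |x i| ^ q ≤ 2 := by
        have hsplit := Finset.add_sum_erase Finset.univ (fun i => |x i| ^ q)
          (Finset.mem_univ (⟨0, hn0⟩ : Fin n))
        have h0 : |x ⟨0, hn0⟩| ^ q = 1 := by rw [hx0]; simp [Real.one_rpow]
        have herase : ∑ i ∈ Finset.univ.erase (⟨0, hn0⟩ : Fin n), |x i| ^ q ≤ 1 := by
          have hterm : ∀ i ∈ Finset.univ.erase (⟨0, hn0⟩ : Fin n), |x i| ^ q ≤ (n:ℝ)⁻¹ := by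
            intro i hi
            have hi' : (i:ℕ) ≠ 0 := by
              intro h
              exact (Finset.mem_erase.mp hi).1 (Fin.ext h)
            rw [hx i, if_neg hi', abs_of_pos ha, haq]
          calc ∑ i ∈ Finset.univ.erase (⟨0, hn0⟩ : Fin n), |x i| ^ q
              ≤ (Finset.univ.erase (⟨0, hn0⟩ : Fin n)).card • (n:ℝ)⁻¹ :=
                Finset.sum_le_card_nsmul _ _ _ hterm
            _ ≤ n • (n:ℝ)⁻¹ := by
                apply nsmul_le_nsmul_left (by positivity)
                calc (Finset.univ.erase (⟨0, hn0⟩ : Fin n)).card ≤ Finset.univ.card :=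
                      Finset.card_le_card (Finset.erase_subset _ _)
                  _ = n := by simp
            _ = 1 := by
                rw [nsmul_eq_mul, mul_inv_cancel₀ hnR.ne']
        linarith [hsplit ▸ (by linarith [herase, h0.ge, h0.le] :
          |x ⟨0, hn0⟩| ^ q + ∑ i ∈ Finset.univ.erase (⟨0, hn0⟩ : Fin n), |x i| ^ q ≤ 2)]
      calc lpNorm q x ≤ (2:ℝ) ^ (1/q) := by
            apply Real.rpow_le_rpow _ hsum (by positivity)
            apply Finset.sum_nonneg; intro i _; positivity
        _ ≤ (2:ℝ) ^ (1:ℝ) := by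
            apply Real.rpow_le_rpow_of_exponent_le (by norm_num)
            rw [div_le_one hq0]; linarith
        _ = 2 := Real.rpow_one 2
    -- lower bound on lpNorm q (x - x')
    have hlow : (9/20 : ℝ) ≤ lpNorm q (x - x') := by
      set S : Finset (Fin n) :=
        Finset.univ.filter (fun i => (i:ℕ) ≠ 0 ∧ x' i = 0) with hS_def
      have hScard : n - 1 - n / 2 ≤ S.card := by
        set A : Finset (Fin n) := Finset.univ.filter (fun i => (i:ℕ) ≠ 0) with hA_def
        set B : Finset (Fin n) := Finset.univ.filter (fun i => x' i ≠ 0) with hB_def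
        have hSAB : A \ B = S := by
          ext i
          simp [hA_def, hB_def, hS_def, not_not]
        have hAcard : A.card = n - 1 := by
          have : A = ({(0 : Fin n)} : Finset (Fin n))ᶜ := by
            ext i
            simp only [hA_def, Finset.mem_filter, Finset.mem_univ, true_and, Finset.mem_compl,
              Finset.mem_singleton, Fin.ext_iff, Fin.val_zero]
          rw [this, Finset.card_compl, Finset.card_singleton, Fintype.card_fin]
        have hBcard : B.card ≤ n / 2 := hx'
        calc n - 1 - n / 2 ≤ A.card - B.card := by omega
          _ ≤ (A \ B).card := Finset.le_card_sdiff B A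
          _ = S.card := by rw [hSAB]
      have hsum : (9/20 : ℝ) ≤ ∑ i, |(x - x') i| ^ q := by
        have h1 : ∑ i ∈ S, |(x - x') i| ^ q ≤ ∑ i, |(x - x') i| ^ q := by
          apply Finset.sum_le_sum_of_subset_of_nonneg (Finset.subset_univ S)
          intro i _ _; positivity
        have h2 : ∑ i ∈ S, |(x - x') i| ^ q = S.card * (n:ℝ)⁻¹ := by
          rw [Finset.sum_congr rfl (fun i hi => ?_), Finset.sum_const, nsmul_eq_mul]
          obtain ⟨hi1, hi2⟩ := Finset.mem_filter.mp hi
          rw [Pi.sub_apply, hx i, if_neg hi2.1, hi2.2, sub_zero, abs_of_pos ha, haq]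
        have h3 : (9/20 : ℝ) ≤ S.card * (n:ℝ)⁻¹ := by
          have hcast : (9:ℝ) * n ≤ 20 * S.card := by
            have : 9 * n ≤ 20 * S.card := by omega
            exact_mod_cast this
          rw [← div_eq_mul_inv, le_div_iff₀ hnR]
          linarith
        linarith [h2 ▸ h1]
      calc (9/20 : ℝ) = (9/20 : ℝ) ^ (1:ℝ) := (Real.rpow_one _).symm
        _ ≤ (9/20 : ℝ) ^ (1/q) := by
            apply Real.rpow_le_rpow_of_exponent_ge (by norm_num) (by norm_num)
            rw [div_le_one hq0]; linarith
        _ ≤ lpNorm q (x - x') :=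
            Real.rpow_le_rpow (by norm_num) hsum (by positivity)
    have h01 : (0.1 : ℝ) * lpNorm q x ≤ 0.2 := by nlinarith [hxq]
    linarith
end

section
/- Let 0 < q ≤ 2 and 0 ≤ ε < 1, and let J_n ∈ ℝ^{n×n} be the all-ones matrix (which has rank 1, so ‖J_n‖_{S_q} = n). Then every matrix A' ∈ ℝ^{n×n} with ‖A' − J_n‖_{S_q} ≤ ε·n satisfies nnz(A') ≥ (1 − ε²)·n². -/
open scoped BigOperators ENNReal
open Matrix

/- ===== auxiliary lemmas ===== -/

lemma aux_sum_eigenvalues_eq_trace {n : Type*} [Fintype n] [DecidableEq n] {A : Matrix n n ℝ}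
    (hA : A.IsHermitian) : ∑ i, hA.eigenvalues i = A.trace := by
  simpa using hA.trace_eq_sum_eigenvalues.symm

lemma aux_trace_transpose_mul_self {m n : Type*} [Fintype m] [Fintype n]
    (A : Matrix m n ℝ) : (Aᵀ * A).trace = ∑ i, ∑ j, A i j ^ 2 := by
  simp only [Matrix.trace, Matrix.diag, Matrix.mul_apply, Matrix.transpose_apply, sq]
  rw [Finset.sum_comm]

lemma aux_rpow_add_le {a b : ℝ} (ha : 0 ≤ a) (hb : 0 ≤ b) {p : ℝ} (hp0 : 0 ≤ p) (hp1 : p ≤ 1) :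
    (a + b) ^ p ≤ a ^ p + b ^ p := by
  have := NNReal.rpow_add_le_add_rpow (⟨a, ha⟩ : NNReal) ⟨b, hb⟩ hp0 hp1
  have h2 := NNReal.coe_le_coe.2 this
  push_cast at h2
  convert h2 using 2 <;> rfl

lemma aux_rpow_sum_le {ι : Type*} (s : Finset ι) (f : ι → ℝ) (hf : ∀ i ∈ s, 0 ≤ f i)
    {p : ℝ} (hp0 : 0 < p) (hp1 : p ≤ 1) :
    (∑ i ∈ s, f i) ^ p ≤ ∑ i ∈ s, f i ^ p := by
  induction s using Finset.cons_induction with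
  | empty => simp [Real.zero_rpow hp0.ne']
  | cons a s h ih =>
    rw [Finset.sum_cons, Finset.sum_cons]
    have ha : 0 ≤ f a := hf a (Finset.mem_cons_self a s)
    have hs : 0 ≤ ∑ i ∈ s, f i :=
      Finset.sum_nonneg fun i hi => hf i (Finset.mem_cons_of_mem hi)
    calc (f a + ∑ i ∈ s, f i) ^ p ≤ f a ^ p + (∑ i ∈ s, f i) ^ p :=
          aux_rpow_add_le ha hs hp0.le hp1
      _ ≤ f a ^ p + ∑ i ∈ s, f i ^ p := by
          gcongr
          exact ih fun i hi => hf i (Finset.mem_cons_of_mem hi)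

/-- Frobenius norm is at most the Schatten q-(quasi)norm for `0 < q ≤ 2`. -/
lemma aux_frob_le_schattenF {n : ℕ} {q : ℝ} (hq0 : 0 < q) (hq2 : q ≤ 2)
    (D : Matrix (Fin n) (Fin n) ℝ) :
    (∑ i, ∑ j, D i j ^ 2) ^ (1/2 : ℝ) ≤ schattenF q D := by
  set μ := (show (Dᵀ * D).IsHermitian by
    simpa [Matrix.conjTranspose_eq_transpose_of_trivial] using
      Matrix.isHermitian_conjTranspose_mul_self D).eigenvalues with hμdef
  have hpsd : (Dᵀ * D).PosSemidef := by
    have := Matrix.posSemidef_conjTranspose_mul_self D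
    rwa [Matrix.conjTranspose_eq_transpose_of_trivial] at this
  have hμ0 : ∀ j, 0 ≤ μ j := fun j => hpsd.eigenvalues_nonneg j
  have hsum : ∑ j, μ j = ∑ i, ∑ j, D i j ^ 2 := by
    rw [hμdef, aux_sum_eigenvalues_eq_trace,
      aux_trace_transpose_mul_self]
  have hS0 : 0 ≤ ∑ i, ∑ j, D i j ^ 2 :=
    Finset.sum_nonneg fun i _ => Finset.sum_nonneg fun j _ => sq_nonneg _
  have hsing : ∀ j, singVals D j ^ q = μ j ^ (q / 2 : ℝ) := by
    intro j
    rw [singVals, Real.sqrt_eq_rpow, ← Real.rpow_mul (hμ0 j)]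
    congr 1
    ring
  have key : (∑ i, ∑ j, D i j ^ 2) ^ (q/2 : ℝ) ≤ ∑ j, singVals D j ^ q := by
    rw [← hsum]
    simp_rw [hsing]
    exact aux_rpow_sum_le _ _ (fun i _ => hμ0 i) (by positivity) (by linarith)
  have : ((∑ i, ∑ j, D i j ^ 2) ^ (q/2 : ℝ)) ^ (1/q : ℝ) ≤ schattenF q D := by
    rw [schattenF]
    exact Real.rpow_le_rpow (Real.rpow_nonneg hS0 _) key (by positivity)
  calc (∑ i, ∑ j, D i j ^ 2) ^ (1/2 : ℝ)
      = ((∑ i, ∑ j, D i j ^ 2) ^ (q/2 : ℝ)) ^ (1/q : ℝ) := by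
        rw [← Real.rpow_mul hS0]
        congr 1
        field_simp
    _ ≤ schattenF q D := this

theorem stmt13 (q ε : ℝ) (hq0 : 0 < q) (hq2 : q ≤ 2) (hε0 : 0 ≤ ε) (hε1 : ε < 1)
    (n : ℕ) (J : Matrix (Fin n) (Fin n) ℝ) (hJ : ∀ i j, J i j = 1) :
    schattenF q J = n ∧
    ∀ A' : Matrix (Fin n) (Fin n) ℝ,
      schattenF q (A' - J) ≤ ε * n → (1 - ε ^ 2) * (n : ℝ) ^ 2 ≤ (nnz A' : ℝ) := by
  constructor
  · -- ‖J‖_{S_q} = n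
    rcases Nat.eq_zero_or_pos n with hn | hn
    · subst hn
      have h0 : schattenF q J = (0:ℝ) ^ (1/q : ℝ) := by simp [schattenF]
      rw [h0, Real.zero_rpow (by positivity)]
      simp
    set hB := (show (Jᵀ * J).IsHermitian by
      simpa [Matrix.conjTranspose_eq_transpose_of_trivial] using
        Matrix.isHermitian_conjTranspose_mul_self J) with hBdef
    set μ := hB.eigenvalues with hμdef
    have hpsd : (Jᵀ * J).PosSemidef := by
      have := Matrix.posSemidef_conjTranspose_mul_self J
      rwa [Matrix.conjTranspose_eq_transpose_of_trivial] at this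
    have hμ0 : ∀ j, 0 ≤ μ j := fun j => hpsd.eigenvalues_nonneg j
    have hsum : ∑ j, μ j = (n : ℝ) ^ 2 := by
      rw [hμdef, aux_sum_eigenvalues_eq_trace,
        aux_trace_transpose_mul_self]
      simp [hJ, sq]
    -- rank J ≤ 1
    have hJfact : J = (Matrix.of fun (_ : Fin n) (_ : Fin 1) => (1:ℝ)) *
        (Matrix.of fun (_ : Fin 1) (_ : Fin n) => (1:ℝ)) := by
      ext i j
      simp [Matrix.mul_apply, hJ]
    have hrank : (Jᵀ * J).rank ≤ 1 := by
      rw [Matrix.rank_transpose_mul_self]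
      calc J.rank ≤ (Matrix.of fun (_ : Fin n) (_ : Fin 1) => (1:ℝ)).rank := by
            rw [hJfact]; exact Matrix.rank_mul_le_left _ _
        _ ≤ Fintype.card (Fin 1) := Matrix.rank_le_card_width _
        _ = 1 := by simp
    have hcard : Fintype.card {i // μ i ≠ 0} ≤ 1 := by
      rw [← hB.rank_eq_card_non_zero_eigs]
      exact hrank
    have hex : ∃ i, μ i ≠ 0 := by
      by_contra h
      push_neg at h
      have : (∑ j, μ j) = 0 := Finset.sum_eq_zero fun j _ => h j
      rw [hsum] at this
      have : (0:ℝ) < (n:ℝ) ^ 2 := by positivity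
      linarith
    obtain ⟨i₀, hi₀⟩ := hex
    have huniq : ∀ j, j ≠ i₀ → μ j = 0 := by
      intro j hj
      by_contra hjz
      have := Fintype.card_le_one_iff.mp hcard ⟨j, hjz⟩ ⟨i₀, hi₀⟩
      exact hj (by simpa using congrArg Subtype.val this)
    have hval : μ i₀ = (n : ℝ) ^ 2 := by
      rw [← hsum]
      exact (Finset.sum_eq_single i₀ (fun j _ hj => huniq j hj)
        (fun h => absurd (Finset.mem_univ i₀) h)).symm
    have hsumq : ∑ j, singVals J j ^ q = (n : ℝ) ^ q := by
      rw [Finset.sum_eq_single i₀]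
      · rw [singVals, ← hμdef, hval, Real.sqrt_sq (Nat.cast_nonneg n)]
      · intro j _ hj
        rw [singVals, ← hμdef, huniq j hj, Real.sqrt_zero, Real.zero_rpow hq0.ne']
      · intro h
        exact absurd (Finset.mem_univ i₀) h
    rw [schattenF, hsumq, ← Real.rpow_mul (Nat.cast_nonneg n),
      mul_one_div_cancel hq0.ne', Real.rpow_one]
  · -- nnz bound
    intro A' hA'
    set D := A' - J with hD
    have hfrob := aux_frob_le_schattenF hq0 hq2 D
    set Z := Finset.univ.filter (fun ij : Fin n × Fin n => A' ij.1 ij.2 = 0) with hZ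
    have hcards : Z.card + nnz A' = n ^ 2 := by
      rw [hZ, nnz]
      rw [Finset.card_filter_add_card_filter_not]
      · simp [sq]
    have hDZ : ∀ p ∈ Z, D p.1 p.2 ^ 2 = 1 := by
      intro p hp
      rw [hZ, Finset.mem_filter] at hp
      simp [hD, hp.2, hJ]
    have hZle : (Z.card : ℝ) ≤ ∑ i, ∑ j, D i j ^ 2 := by
      rw [← Finset.sum_product']
      calc (Z.card : ℝ) = ∑ p ∈ Z, D p.1 p.2 ^ 2 := by
            rw [Finset.sum_congr rfl hDZ]
            simp
        _ ≤ ∑ p ∈ (Finset.univ : Finset (Fin n × Fin n)), D p.1 p.2 ^ 2 :=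
            Finset.sum_le_sum_of_subset_of_nonneg (Finset.subset_univ _)
              (fun p _ _ => sq_nonneg _)
        _ = ∑ p ∈ Finset.univ ×ˢ Finset.univ, D p.1 p.2 ^ 2 := by
            rw [Finset.univ_product_univ]
    have hchain : (Z.card : ℝ) ^ (1/2 : ℝ) ≤ ε * n := by
      calc (Z.card : ℝ) ^ (1/2 : ℝ) ≤ (∑ i, ∑ j, D i j ^ 2) ^ (1/2 : ℝ) :=
            Real.rpow_le_rpow (Nat.cast_nonneg _) hZle (by norm_num)
        _ ≤ schattenF q D := hfrob
        _ ≤ ε * n := hA'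
    have hZsq : (Z.card : ℝ) ≤ ε ^ 2 * (n : ℝ) ^ 2 := by
      have h1 : ((Z.card : ℝ) ^ (1/2 : ℝ)) ^ 2 ≤ (ε * n) ^ 2 := by
        apply pow_le_pow_left₀ (Real.rpow_nonneg (Nat.cast_nonneg _) _) hchain
      rwa [← Real.sqrt_eq_rpow, Real.sq_sqrt (Nat.cast_nonneg _), mul_pow] at h1
    have hn2 : ((n : ℝ)) ^ 2 = (Z.card : ℝ) + (nnz A' : ℝ) := by
      have := congrArg (Nat.cast : ℕ → ℝ) hcards
      push_cast at this
      linarith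
    linarith
end
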